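/- Let d ≥ 1, let (φₙ)_{n=0}^∞ be a basis in H(ℂ^d) with φ₀ ≡ 1, and let K ⊆ K₁ be compact subsets of ℂ^d such that every entire function h = ∑_{n=0}^∞ hₙ φₙ satisfies ∑_{n=0}^∞ |hₙ| |φₙ|_K ≤ |h|_{K₁}. Let G ⊇ K₁ be a domain (nonempty open connected set) such that (φₙ) is also a basis in H(G). Then every bounded analytic function f on G with expansion f = ∑_{n=0}^∞ fₙ φₙ in H(G) satisfies ∑_{n=0}^∞ |fₙ| |φₙ|_K ≤ sup_{z∈G} |f(z)|. -/

import Mathlib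

open Filter Topology Metric

/-- `ℂ^d` with the Euclidean norm. -/
abbrev Cd (d : ℕ) := EuclideanSpace ℂ (Fin d)

variable {E : Type*} [NormedAddCommGroup E] [NormedSpace ℂ E]

/-- `supNorm f K = sup_{z ∈ K} |f z|`. -/
noncomputable def supNorm (f : E → ℂ) (K : Set E) : ℝ :=
  sSup ((fun z => ‖f z‖) '' K)

/-- The series `∑ cₙ φₙ` converges to `f` uniformly on every compact subset of `D`. -/
def ExpandsTo (φ : ℕ → E → ℂ) (c : ℕ → ℂ) (f : E → ℂ) (D : Set E) : Prop :=
  ∀ K : Set E, K ⊆ D → IsCompact K →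
    TendstoUniformlyOn (fun N z => ∑ n ∈ Finset.range N, c n * φ n z) f atTop K

/-- `φ` is a basis of the space of analytic functions on `D`: each `φₙ` is analytic on `D`
and every analytic function on `D` has a unique expansion converging uniformly on
compact subsets of `D`. -/
def IsBasisOn (φ : ℕ → E → ℂ) (D : Set E) : Prop :=
  (∀ n, DifferentiableOn ℂ (φ n) D) ∧
    ∀ f : E → ℂ, DifferentiableOn ℂ f D → ∃! c : ℕ → ℂ, ExpandsTo φ c f D

/-- The Global Bohr Property of a basis `φ`, relative to `D`. -/
def HasGBP (φ : ℕ → E → ℂ) (D : Set E) : Prop :=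
  ∀ K : Set E, K ⊆ D → IsCompact K →
    ∃ K₁ : Set E, K₁ ⊆ D ∧ IsCompact K₁ ∧ K ⊆ K₁ ∧
      ∀ (f : E → ℂ) (c : ℕ → ℂ), DifferentiableOn ℂ f D → ExpandsTo φ c f D →
        ∀ N : ℕ, ∑ n ∈ Finset.range N, ‖c n‖ * supNorm (φ n) K ≤ supNorm f K₁

/-- Every bounded analytic function on `D` is constant. -/
def LiouvilleProperty (D : Set E) : Prop :=
  ∀ f : E → ℂ, DifferentiableOn ℂ f D → (∃ M : ℝ, ∀ z ∈ D, ‖f z‖ ≤ M) →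
    ∀ z ∈ D, ∀ w ∈ D, f z = f w

/-- The Schwarz Property of a domain `D`. -/
def SchwarzProperty (D : Set E) : Prop :=
  ∀ z₀ ∈ D, ∀ K : Set E, K ⊆ D → IsCompact K → z₀ ∈ K → ∀ δ : ℝ, 0 < δ →
    ∃ K₁ : Set E, K₁ ⊆ D ∧ IsCompact K₁ ∧ K ⊆ K₁ ∧
      ∀ (U : Set E) (f : E → ℂ), IsOpen U → K₁ ⊆ U → DifferentiableOn ℂ f U →
        supNorm (fun z => f z - f z₀) K ≤ δ * supNorm (fun z => f z - f z₀) K₁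

/-- An exhaustion of `D` by relatively compact open sets. -/
def IsExhaustion (Dn : ℕ → Set E) (D : Set E) : Prop :=
  (∀ n, IsOpen (Dn n)) ∧ (∀ n, IsCompact (closure (Dn n))) ∧
    (∀ n, closure (Dn n) ⊆ Dn (n + 1)) ∧ (⋃ n, Dn n) = D

/-- `gammaFn U z₀ z = sup {|f z| : f analytic on U, f z₀ = 0, sup_U |f| ≤ 1}`. -/
noncomputable def gammaFn (U : Set E) (z₀ z : E) : ℝ :=
  sSup {t : ℝ | ∃ f : E → ℂ, DifferentiableOn ℂ f U ∧ f z₀ = 0 ∧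
    (∀ w ∈ U, ‖f w‖ ≤ 1) ∧ t = ‖f z‖}


/-- if `(φₙ)` is a basis of `H(ℂ^d)` with `φ₀ ≡ 1`, `K ⊆ K₁` are compact
sets realizing the Bohr inequality for entire functions, and `G ⊇ K₁` is a domain such
that `(φₙ)` is also a basis of `H(G)`, then every bounded analytic `f = ∑ fₙ φₙ` on `G`
satisfies `∑ |fₙ| |φₙ|_K ≤ sup_G |f|`. -/
lemma supNorm_nonneg (f : E → ℂ) (K : Set E) : 0 ≤ supNorm f K := by
  apply Real.sSup_nonneg
  rintro x ⟨z, -, rfl⟩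
  exact norm_nonneg _

theorem stmt10 (d : ℕ) (hd : 1 ≤ d) (φ : ℕ → Cd d → ℂ)
    (hbasis : IsBasisOn φ (Set.univ : Set (Cd d)))
    (hφ0 : ∀ z : Cd d, φ 0 z = 1)
    (K K₁ : Set (Cd d)) (hK : IsCompact K) (hK₁ : IsCompact K₁) (hKK₁ : K ⊆ K₁)
    (hBohr : ∀ (h : Cd d → ℂ) (c : ℕ → ℂ), Differentiable ℂ h →
      ExpandsTo φ c h (Set.univ : Set (Cd d)) →
      ∀ N : ℕ, ∑ n ∈ Finset.range N, ‖c n‖ * supNorm (φ n) K ≤ supNorm h K₁)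
    (G : Set (Cd d)) (hG : IsOpen G) (hGconn : IsConnected G) (hK₁G : K₁ ⊆ G)
    (hbasisG : IsBasisOn φ G)
    (f : Cd d → ℂ) (c : ℕ → ℂ) (hf : DifferentiableOn ℂ f G)
    (hbd : ∃ M : ℝ, ∀ z ∈ G, ‖f z‖ ≤ M) (hexp : ExpandsTo φ c f G) :
    ∀ N : ℕ, ∑ n ∈ Finset.range N, ‖c n‖ * supNorm (φ n) K ≤ supNorm f G := by
  obtain ⟨M₀, hM₀⟩ := hbd
  -- basic boundedness facts
  have hbddG : BddAbove ((fun z => ‖f z‖) '' G) := by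
    refine ⟨M₀, ?_⟩; rintro x ⟨z, hz, rfl⟩; exact hM₀ z hz
  have hfK₁cont : ContinuousOn (fun z => ‖f z‖) K₁ :=
    ((hf.continuousOn).mono hK₁G).norm
  have hbddK₁ : BddAbove ((fun z => ‖f z‖) '' K₁) :=
    hK₁.bddAbove_image hfK₁cont
  have hK₁G' : supNorm f K₁ ≤ supNorm f G := by
    apply Real.sSup_le
    · rintro x ⟨z, hz, rfl⟩
      exact le_csSup hbddG ⟨z, hK₁G hz, rfl⟩
    · exact supNorm_nonneg f G
  -- sup of f on K₁ dominates values
  have hfleK₁ : ∀ z ∈ K₁, ‖f z‖ ≤ supNorm f K₁ := fun z hz =>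
    le_csSup hbddK₁ ⟨z, hz, rfl⟩
  -- partial sums are entire and satisfy the Bohr inequality
  have hpartial : ∀ M : ℕ,
      ∑ n ∈ Finset.range M, ‖c n‖ * supNorm (φ n) K
        ≤ supNorm (fun z => ∑ n ∈ Finset.range M, c n * φ n z) K₁ := by
    intro M
    set SM : Cd d → ℂ := fun z => ∑ n ∈ Finset.range M, c n * φ n z with hSM
    set c' : ℕ → ℂ := fun n => if n < M then c n else 0 with hc'
    have hSMdiff : Differentiable ℂ SM := by
      apply Differentiable.fun_sum
      intro n _
      exact (differentiable_const _).mul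
        (differentiableOn_univ.mp (hbasis.1 n))
    have hsum_eq : ∀ (N : ℕ), M ≤ N → ∀ z,
        ∑ n ∈ Finset.range N, c' n * φ n z = SM z := by
      intro N hMN z
      rw [hSM]
      rw [← Finset.sum_subset (Finset.range_subset_range.2 hMN)
        (f := fun n => c' n * φ n z) ?_]
      · exact Finset.sum_congr rfl fun n hn => by
          simp [hc', if_pos (Finset.mem_range.mp hn)]
      · intro x hx hx'
        simp only [Finset.mem_range] at hx'
        simp [hc', if_neg (not_lt.2 (le_of_not_gt hx'))]
    have hSMexp : ExpandsTo φ c' SM (Set.univ : Set (Cd d)) := by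
      intro K' _ _
      rw [Metric.tendstoUniformlyOn_iff]
      intro ε hε
      filter_upwards [eventually_ge_atTop M] with N hMN z _
      rw [hsum_eq N hMN z, dist_self]
      exact hε
    have := hBohr SM c' hSMdiff hSMexp M
    calc ∑ n ∈ Finset.range M, ‖c n‖ * supNorm (φ n) K
        = ∑ n ∈ Finset.range M, ‖c' n‖ * supNorm (φ n) K := by
          refine Finset.sum_congr rfl fun n hn => ?_
          simp [hc', if_pos (Finset.mem_range.mp hn)]
      _ ≤ supNorm SM K₁ := this
  -- uniform convergence on K₁
  have huc := hexp K₁ hK₁G hK₁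
  rw [Metric.tendstoUniformlyOn_iff] at huc
  intro N
  refine le_of_forall_pos_le_add fun ε hε => ?_
  obtain ⟨M, hMN, hM⟩ := ((huc ε hε).and (eventually_ge_atTop N)).exists
  have h1 : ∑ n ∈ Finset.range N, ‖c n‖ * supNorm (φ n) K
      ≤ ∑ n ∈ Finset.range M, ‖c n‖ * supNorm (φ n) K := by
    apply Finset.sum_le_sum_of_subset_of_nonneg (Finset.range_subset_range.2 hM)
    intro n _ _
    exact mul_nonneg (norm_nonneg _) (supNorm_nonneg _ _)
  have h2 : supNorm (fun z => ∑ n ∈ Finset.range M, c n * φ n z) K₁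
      ≤ supNorm f K₁ + ε := by
    apply Real.sSup_le
    · rintro x ⟨z, hz, rfl⟩
      have hd := hMN z hz
      have : ‖∑ n ∈ Finset.range M, c n * φ n z‖ ≤ ‖f z‖ + ε := by
        have := (norm_sub_norm_le (∑ n ∈ Finset.range M, c n * φ n z) (f z)).trans ((dist_eq_norm _ (f z)).symm.le.trans ((dist_comm (f z) _).symm.le.trans hd.le))
        linarith [this]
      exact this.trans (by linarith [hfleK₁ z hz])
    · linarith [supNorm_nonneg f K₁]
  calc ∑ n ∈ Finset.range N, ‖c n‖ * supNorm (φ n) K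
      ≤ ∑ n ∈ Finset.range M, ‖c n‖ * supNorm (φ n) K := h1
    _ ≤ supNorm (fun z => ∑ n ∈ Finset.range M, c n * φ n z) K₁ := hpartial M
    _ ≤ supNorm f K₁ + ε := h2
    _ ≤ supNorm f G + ε := by linarith [hK₁G']
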